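/- Let d be a positive integer, p a prime with p > 3d, and b, m ≥ 1. Let A be a finite subset of ℕ × ℤ/(b) of cardinality bm, and let τ be a permutation of A such that p·a₁ − (τ(a))₁ ≥ 0 for every a = (a₁, u) ∈ A (if this fails for some a, the corresponding term is +∞ and the inequality holds trivially). Then ∑_{a ∈ A} ⌈(p·a₁ − (τ(a))₁)/d⌉ ≥ b·p_△(m). Moreover, if m is a turning point of p_△ (i.e. ϖ(m) > ϖ(m−1)) and A ≠ A_m × ℤ/(b), where A_m := {a ∈ ℕ : ϖ(a) ≤ ϖ(m−1)}, then the inequality is strict. -/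

import Mathlib

set_option maxHeartbeats 1000000


open scoped Classical

/-- `{x}' := {x}` if the fractional part is nonzero, else `1`. -/
noncomputable def fract' (x : ℚ) : ℚ := if Int.fract x = 0 then 1 else Int.fract x

/-- `δ_∈(a) = 1` iff there is `i ≥ 1` with `p·i ≡ a (mod d)` and `i/d < {a/d}`. -/
noncomputable def deltaIn (d p a : ℕ) : ℤ :=
  if ∃ i : ℕ, 1 ≤ i ∧ p * i ≡ a [MOD d] ∧ (i : ℚ) / d < Int.fract ((a : ℚ) / d) then 1 else 0

/-- `δ_<(a) = 1` iff `{a/d}' < {pa/d}'`. -/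
noncomputable def deltaLt (d p a : ℕ) : ℤ :=
  if fract' ((a : ℚ) / d) < fract' (((p : ℚ) * a) / d) then 1 else 0

/-- `ϖ(a) = ⌈(p−1)a/d⌉ − δ_∈(a)`. -/
noncomputable def varpi (d p a : ℕ) : ℤ :=
  ⌈(((p : ℚ) - 1) * a) / d⌉ - deltaIn d p a

/-- The arithmetic polygon of `△ = [0, d]`: `p_△(m) = ∑_{a=0}^{m−1} ϖ(a)`. -/
noncomputable def pTri (d p m : ℕ) : ℤ := ∑ a ∈ Finset.range m, varpi d p a

/- ### Auxiliary machinery -/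

private lemma ceil_mul_d (d : ℕ) (hd : 0 < d) (z : ℤ) :
    (d : ℤ) * ⌈(z : ℚ) / (d : ℚ)⌉ = z + (-z) % d := by
  have h1 : (⌈(z : ℚ) / (d : ℚ)⌉ : ℤ) = -((-z) / (d : ℤ)) := by
    rw [show (z : ℚ) / (d : ℚ) = -((((-z) : ℤ) : ℚ) / (d : ℚ)) by push_cast; ring,
      Int.ceil_neg, Rat.floor_intCast_div_natCast]
  have h2 := Int.mul_ediv_add_emod (-z) (d : ℤ)
  rw [h1]
  linear_combination -h2

private lemma emod_sub_eq (d : ℕ) (hd : 0 < d) (u v : ℕ) (hu : u < d) (hv : v < d) :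
    ((u : ℤ) - v) % d = (u : ℤ) - v + (if u < v then (d : ℤ) else 0) := by
  split_ifs with h
  · have h3 : ((u : ℤ) - v) % d = ((u : ℤ) - v + d * 1) % d :=
      (Int.add_mul_emod_self_left _ _ _).symm
    rw [h3, mul_one, Int.emod_eq_of_lt (by omega) (by omega)]
  · rw [Int.emod_eq_of_lt (by omega) (by omega)]; ring

private lemma pe (d s : ℕ) (hd : 0 < d) (u v : ℕ) (hu : u < d) (hv : v < d) :
    (u : ℤ) - v + (d : ℤ) * ((if u < s then (1 : ℤ) else 0) - (if v < s then (1 : ℤ) else 0)) ≤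
      ((u : ℤ) - v) % d := by
  rw [emod_sub_eq d hd u v hu hv]
  have hdz : (0 : ℤ) < (d : ℤ) := by exact_mod_cast hd
  split_ifs <;> push_cast <;> nlinarith

private lemma mulmod (d p n : ℕ) : (p * (n % d)) % d = (p * n) % d := by
  rw [Nat.mul_mod, Nat.mod_mod_of_dvd n dvd_rfl, ← Nat.mul_mod]

private lemma fract_div (d : ℕ) (hd : 0 < d) (n : ℕ) :
    Int.fract ((n : ℚ) / d) = ((n % d : ℕ) : ℚ) / d := by
  have hdq : (0 : ℚ) < (d : ℚ) := by exact_mod_cast hd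
  have key : (n : ℚ) = (d : ℚ) * ((n / d : ℕ) : ℚ) + ((n % d : ℕ) : ℚ) := by
    exact_mod_cast congrArg (Nat.cast : ℕ → ℚ) (Nat.div_add_mod n d).symm
  have h1 : (n : ℚ) / d = (((n / d : ℕ) : ℤ) : ℚ) + ((n % d : ℕ) : ℚ) / d := by
    rw [key, add_div, mul_div_cancel_left₀ _ hdq.ne']
    norm_cast
  rw [h1, Int.fract_intCast_add, Int.fract_eq_self.mpr ⟨by positivity, ?_⟩]
  rw [div_lt_one hdq]
  exact_mod_cast Nat.mod_lt n hd

private lemma delta_char (d p : ℕ) (hd : 0 < d) (n : ℕ) :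
    deltaIn d p n =
      if (∃ i : ℕ, 0 < i ∧ i < n % d ∧ (p * i) % d = n % d) then (1 : ℤ) else 0 := by
  have hdq : (0 : ℚ) < (d : ℚ) := by exact_mod_cast hd
  have hiff : (∃ i : ℕ, 1 ≤ i ∧ p * i ≡ n [MOD d] ∧ (i : ℚ) / d < Int.fract ((n : ℚ) / d)) ↔
      (∃ i : ℕ, 0 < i ∧ i < n % d ∧ (p * i) % d = n % d) := by
    rw [fract_div d hd n]
    constructor
    · rintro ⟨i, h1, h2, h3⟩
      refine ⟨i, h1, ?_, h2⟩
      have := (div_lt_div_iff_of_pos_right hdq).mp h3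
      exact_mod_cast this
    · rintro ⟨i, h1, h2, h3⟩
      refine ⟨i, h1, h3, ?_⟩
      apply (div_lt_div_iff_of_pos_right hdq).mpr
      exact_mod_cast h2
  simp only [deltaIn, hiff]

private lemma sum_mod_range (d : ℕ) (hd : 0 < d) (g : ℕ → ℤ) (M : ℕ) :
    ∑ n ∈ Finset.range M, g (n % d) =
      ((M / d : ℕ) : ℤ) * (∑ x ∈ Finset.range d, g x) + ∑ x ∈ Finset.range (M % d), g x := by
  induction M with
  | zero => simp
  | succ n ih =>
    rw [Finset.sum_range_succ, ih]
    have hmd : n % d < d := Nat.mod_lt _ hd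
    have hdam := Nat.div_add_mod n d
    have hrep : n + 1 = (n % d + 1) + d * (n / d) := by
      conv_lhs => rw [← hdam]
      ring
    rcases Nat.lt_or_ge (n % d + 1) d with hlt | hge
    case _ =>
      have h1 : (n + 1) % d = n % d + 1 := by
        rw [hrep, Nat.add_mul_mod_self_left, Nat.mod_eq_of_lt hlt]
      have h2 : (n + 1) / d = n / d := by
        rw [hrep, Nat.add_mul_div_left _ _ hd, Nat.div_eq_of_lt hlt, Nat.zero_add]
      rw [h1, h2, Finset.sum_range_succ]
      ring
    case _ =>
      have he : n % d + 1 = d := le_antisymm (by omega) hge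
      have h1 : (n + 1) % d = 0 := by
        rw [hrep, Nat.add_mul_mod_self_left, he, Nat.mod_self]
      have h2 : (n + 1) / d = n / d + 1 := by
        rw [hrep, Nat.add_mul_div_left _ _ hd, he, Nat.div_self hd, Nat.add_comm]
      have hS : ∑ x ∈ Finset.range d, g x = ∑ x ∈ Finset.range (n % d), g x + g (n % d) := by
        rw [← Finset.sum_range_succ, he]
      rw [h1, h2, Finset.sum_range_zero, hS]
      push_cast
      ring

private lemma reindex_mul (d p σ : ℕ) (hd : 0 < d) (h1 : (σ * p) % d = 1 % d)
    (h2 : (p * σ) % d = 1 % d) (g : ℕ → ℤ) :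
    ∑ x ∈ Finset.range d, g ((p * x) % d) = ∑ x ∈ Finset.range d, g x := by
  refine Finset.sum_nbij' (fun x => (p * x) % d) (fun y => (σ * y) % d) ?_ ?_ ?_ ?_ ?_
  · intro a _; exact Finset.mem_range.mpr (Nat.mod_lt _ hd)
  · intro a _; exact Finset.mem_range.mpr (Nat.mod_lt _ hd)
  · intro a ha
    show (σ * ((p * a) % d)) % d = a
    rw [mulmod d σ (p * a), ← Nat.mul_assoc]
    calc ((σ * p) * a) % d = ((σ * p) % d * (a % d)) % d := Nat.mul_mod _ _ _
      _ = (1 % d * (a % d)) % d := by rw [h1]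
      _ = a := by rw [← Nat.mul_mod, one_mul, Nat.mod_eq_of_lt (Finset.mem_range.mp ha)]
  · intro a ha
    show (p * ((σ * a) % d)) % d = a
    rw [mulmod d p (σ * a), ← Nat.mul_assoc]
    calc ((p * σ) * a) % d = ((p * σ) % d * (a % d)) % d := Nat.mul_mod _ _ _
      _ = (1 % d * (a % d)) % d := by rw [h2]
      _ = a := by rw [← Nat.mul_mod, one_mul, Nat.mod_eq_of_lt (Finset.mem_range.mp ha)]
  · intro a _; rfl

private lemma dr (d p : ℕ) (hd : 0 < d) (hgcd : Nat.gcd d p = 1) (y : ℕ) (hy : y < d) :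
    (∃ i : ℕ, 0 < i ∧ i < (p * y) % d ∧ (p * i) % d = (p * y) % d) ↔
      (0 < y ∧ y < (p * y) % d) := by
  constructor
  · rintro ⟨i, h1, h2, h3⟩
    have hmeq : p * i ≡ p * y [MOD d] := h3
    have h4 : i ≡ y [MOD d] := Nat.ModEq.cancel_left_of_coprime hgcd hmeq
    have hi : i < d := lt_trans h2 (Nat.mod_lt _ hd)
    have h5 : i = y := by
      have := h4
      rwa [Nat.ModEq, Nat.mod_eq_of_lt hi, Nat.mod_eq_of_lt hy] at this
    subst h5
    exact ⟨h1, h2⟩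
  · rintro ⟨h1, h2⟩; exact ⟨y, h1, h2, rfl⟩

/-- `E`-decomposition of `↑(n%d) - ↑((p*n)%d)`. -/
private lemma em3 (d p : ℕ) (hd : 0 < d) (n : ℕ) :
    ∃ E : ℤ, 0 ≤ E ∧ E < d ∧ E = ((n : ℤ) - p * n) % d ∧
      ((n % d : ℕ) : ℤ) - (((p * n) % d : ℕ) : ℤ) =
        E - (d : ℤ) * (if n % d < (p * n) % d then (1 : ℤ) else 0) := by
  have hdz : ((d : ℤ)) ≠ 0 := by positivity
  have hdpos : (0 : ℤ) < (d : ℤ) := by exact_mod_cast hd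
  refine ⟨((n : ℤ) - p * n) % d, Int.emod_nonneg _ hdz, Int.emod_lt_of_pos _ hdpos, rfl, ?_⟩
  have hstep : ((n : ℤ) - p * n) % d = (((n % d : ℕ) : ℤ) - (((p * n) % d : ℕ) : ℤ)) % d := by
    rw [show ((n : ℤ) - p * n) = ((n : ℤ) - ((p * n : ℕ) : ℤ)) by push_cast; ring,
      Int.sub_emod, ← Int.natCast_mod n d, ← Int.natCast_mod (p * n) d]
  rw [hstep, emod_sub_eq d hd _ _ (Nat.mod_lt _ hd) (Nat.mod_lt _ hd)]
  split_ifs <;> ring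

/-- The combined weight function, scaled by `d`. -/
private def KD (d p s n : ℕ) : ℤ :=
  ((p : ℤ) - 1) * n + (((n % d : ℕ) : ℤ) - (((p * n) % d : ℕ) : ℤ)) +
    (d : ℤ) * ((if n % d < s then (1 : ℤ) else 0) - (if (p * n) % d < s then (1 : ℤ) else 0))

private lemma xi_lb (s a b : ℕ) :
    -1 ≤ (if a < s then (1 : ℤ) else 0) - (if b < s then (1 : ℤ) else 0)
      - (if a < b then (1 : ℤ) else 0) := by
  split_ifs <;> omega

private lemma xi_ub (s a b : ℕ) :
    (if a < s then (1 : ℤ) else 0) - (if b < s then (1 : ℤ) else 0)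
      - (if a < b then (1 : ℤ) else 0) ≤ 1 := by
  split_ifs <;> omega

private lemma kd_step (d p s : ℕ) (hd : 0 < d) (hpd : 3 * d < p) (n : ℕ) :
    KD d p s n + 1 ≤ KD d p s (n + 1) := by
  obtain ⟨E, hE0, hEd, -, hEeq⟩ := em3 d p hd n
  obtain ⟨F, hF0, hFd, -, hFeq⟩ := em3 d p hd (n + 1)
  have hpz : (3 : ℤ) * d < p := by exact_mod_cast hpd
  have hd0 : (0 : ℤ) ≤ (d : ℤ) := by positivity
  have h1 := mul_le_mul_of_nonneg_left (xi_lb s ((n + 1) % d) ((p * (n + 1)) % d)) hd0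
  have h2 := mul_le_mul_of_nonneg_left (xi_ub s (n % d) ((p * n) % d)) hd0
  simp only [KD]
  push_cast at hEeq hFeq h1 h2 ⊢
  linarith [hEeq, hFeq, h1, h2]

private lemma varpi_eq (d p : ℕ) (hd : 0 < d) (n : ℕ) :
    (d : ℤ) * varpi d p n = ((p : ℤ) - 1) * n + ((n : ℤ) - p * n) % d -
      (d : ℤ) * deltaIn d p n := by
  simp only [varpi]
  rw [mul_sub]
  congr 1
  have h := ceil_mul_d d hd (((p : ℤ) - 1) * n)
  rw [show (((((p : ℤ) - 1) * (n : ℕ)) : ℤ) : ℚ) = ((p : ℚ) - 1) * (n : ℚ) by push_cast; ring]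
    at h
  rw [h, show -(((p : ℤ) - 1) * (n : ℕ)) = ((n : ℕ) : ℤ) - p * n by ring]

private lemma deltaIn_bounds (d p n : ℕ) : 0 ≤ deltaIn d p n ∧ deltaIn d p n ≤ 1 := by
  unfold deltaIn; split_ifs <;> omega

private lemma varpi_strictMono (d p : ℕ) (hd : 0 < d) (hpd : 3 * d < p) :
    StrictMono (varpi d p) := by
  apply strictMono_nat_of_lt_succ
  intro n
  have hdpos : (0 : ℤ) < (d : ℤ) := by exact_mod_cast hd
  have h1 := varpi_eq d p hd n
  have h2 := varpi_eq d p hd (n + 1)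
  have hb1 := deltaIn_bounds d p n
  have hb2 := deltaIn_bounds d p (n + 1)
  have hdz : ((d : ℤ)) ≠ 0 := by positivity
  have e10 : 0 ≤ ((n : ℤ) - p * n) % d := Int.emod_nonneg _ hdz
  have e1d : ((n : ℤ) - p * n) % d < d := Int.emod_lt_of_pos _ hdpos
  have e20 : 0 ≤ (((n : ℕ) + 1 : ℤ) - p * ((n : ℕ) + 1)) % d := Int.emod_nonneg _ hdz
  have hpz : (3 : ℤ) * d < p := by exact_mod_cast hpd
  have key : (d : ℤ) * varpi d p n < (d : ℤ) * varpi d p (n + 1) := by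
    rw [h1, h2]
    push_cast
    push_cast at e20
    nlinarith
  exact lt_of_mul_lt_mul_left key (le_of_lt hdpos)

private lemma kd_varpi (d p s : ℕ) (hd : 0 < d) (n : ℕ) :
    KD d p s n = (d : ℤ) * varpi d p n + (d : ℤ) * deltaIn d p n +
      (d : ℤ) * ((if n % d < s then (1 : ℤ) else 0) - (if (p * n) % d < s then (1 : ℤ) else 0)
        - (if n % d < (p * n) % d then (1 : ℤ) else 0)) := by
  obtain ⟨E, -, -, hEdef, hEeq⟩ := em3 d p hd n
  rw [varpi_eq d p hd n]
  simp only [KD]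
  rw [hEeq, hEdef]
  ring

theorem stmt4 (d p : ℕ) (hd : 0 < d) (hp : p.Prime) (hpd : 3 * d < p)
    (b m : ℕ) [NeZero b] (hm : 1 ≤ m)
    (A : Finset (ℕ × ZMod b)) (hcard : A.card = b * m)
    (τ : Equiv.Perm (ℕ × ZMod b)) (hτ : ∀ a ∈ A, τ a ∈ A)
    (hpos : ∀ a ∈ A, ((τ a).1 : ℤ) ≤ (p : ℤ) * a.1) :
    ((b : ℤ) * pTri d p m ≤ ∑ a ∈ A, ⌈((p : ℚ) * a.1 - ((τ a).1 : ℚ)) / d⌉) ∧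
    ((varpi d p (m - 1) < varpi d p m ∧
        (↑A : Set (ℕ × ZMod b)) ≠ {x : ℕ × ZMod b | varpi d p x.1 ≤ varpi d p (m - 1)}) →
      (b : ℤ) * pTri d p m < ∑ a ∈ A, ⌈((p : ℚ) * a.1 - ((τ a).1 : ℚ)) / d⌉) := by
  classical
  have hdpos : (0 : ℤ) < (d : ℤ) := by exact_mod_cast hd
  have hdlt : d < p := by omega
  have hcop : Nat.Coprime p d := (Nat.Prime.coprime_iff_not_dvd hp).mpr
    (fun hdvd => absurd (Nat.le_of_dvd hd hdvd) (by omega))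
  have hgcd : Nat.gcd d p = 1 := by rw [Nat.gcd_comm]; exact hcop
  set s : ℕ := m % d with hs
  have hsd : s < d := Nat.mod_lt _ hd
  -- inverse of p mod d
  haveI : NeZero d := ⟨hd.ne'⟩
  set u : (ZMod d)ˣ := ZMod.unitOfCoprime p hcop with hu
  set σ : ℕ := ((u⁻¹ : (ZMod d)ˣ) : ZMod d).val with hσdef
  have hσcast : ((σ : ℕ) : ZMod d) = ((u⁻¹ : (ZMod d)ˣ) : ZMod d) := by
    rw [hσdef, ZMod.natCast_val, ZMod.cast_id]
  have hσp : (σ * p) % d = 1 % d := by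
    have hz : ((σ * p : ℕ) : ZMod d) = ((1 : ℕ) : ZMod d) := by
      push_cast
      rw [hσcast, show ((p : ℕ) : ZMod d) = ((u : (ZMod d)ˣ) : ZMod d) from
        (ZMod.coe_unitOfCoprime p hcop).symm, ← Units.val_mul, inv_mul_cancel, Units.val_one]
    exact (ZMod.natCast_eq_natCast_iff _ _ _).mp hz
  have hpσ : (p * σ) % d = 1 % d := by rw [Nat.mul_comm]; exact hσp
  -- indicator functions on residues
  set c1 : ℕ → ℤ := fun x => if x < s then 1 else 0 with hc1
  set c2 : ℕ → ℤ := fun x => if (p * x) % d < s then 1 else 0 with hc2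
  set c3 : ℕ → ℤ := fun x => if x < (p * x) % d then 1 else 0 with hc3
  set cdel : ℕ → ℤ :=
    fun x => if (∃ i : ℕ, 0 < i ∧ i < x ∧ (p * i) % d = x) then 1 else 0 with hcdel
  have hδ : ∀ n : ℕ, deltaIn d p n = cdel (n % d) := fun n => delta_char d p hd n
  have hcdel_rho : ∀ y < d, cdel ((p * y) % d) = c3 y := by
    intro y hy
    simp only [hcdel, hc3]
    rw [if_congr (dr d p hd hgcd y hy) rfl rfl]
    by_cases h0 : 0 < y
    · simp [h0]
    · have hy0 : y = 0 := by omega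
      subst hy0
      simp
  -- the key counting identity (★)
  have claimd : ∑ x ∈ Finset.range d, (c1 x + cdel x) =
      ∑ x ∈ Finset.range d, (c2 x + c3 x) := by
    rw [Finset.sum_add_distrib, Finset.sum_add_distrib]
    congr 1
    · rw [← reindex_mul d p σ hd hσp hpσ c1]
    · rw [← reindex_mul d p σ hd hσp hpσ cdel]
      exact Finset.sum_congr rfl fun y hy => hcdel_rho y (Finset.mem_range.mp hy)
  have claims : ∑ x ∈ Finset.range s, (c1 x + cdel x) =
      ∑ x ∈ Finset.range s, (c2 x + c3 x) := by
    have e0 : ∑ x ∈ Finset.range s, cdel x = ∑ x ∈ Finset.range s, c1 x * cdel x :=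
      Finset.sum_congr rfl fun x hx => by
        have hx' : x < s := Finset.mem_range.mp hx
        simp [hc1, hx']
    have e1 : ∑ x ∈ Finset.range s, c1 x * cdel x = ∑ x ∈ Finset.range d, c1 x * cdel x :=
      Finset.sum_subset (Finset.range_subset_range.mpr hsd.le) (fun x _ hx => by
        have hx' : ¬ x < s := fun h => hx (Finset.mem_range.mpr h)
        simp [hc1, hx'])
    have e2 : ∑ x ∈ Finset.range d, c1 x * cdel x = ∑ y ∈ Finset.range d, c2 y * c3 y := by
      rw [← reindex_mul d p σ hd hσp hpσ (fun t => c1 t * cdel t)]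
      refine Finset.sum_congr rfl fun y hy => ?_
      have hy' : y < d := Finset.mem_range.mp hy
      show c1 ((p * y) % d) * cdel ((p * y) % d) = c2 y * c3 y
      rw [hcdel_rho y hy']
    have e3 : ∑ y ∈ Finset.range d, c2 y * c3 y = ∑ y ∈ Finset.range s, c2 y * c3 y := by
      symm
      refine Finset.sum_subset (Finset.range_subset_range.mpr hsd.le) (fun y _ hy => ?_)
      have hy' : ¬ y < s := fun h => hy (Finset.mem_range.mpr h)
      simp only [hc2, hc3]
      split_ifs <;> first | omega | ring
    have hA : ∑ x ∈ Finset.range s, cdel x = ∑ x ∈ Finset.range s, c2 x * c3 x := by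
      rw [e0, e1, e2, e3]
    rw [Finset.sum_add_distrib, Finset.sum_add_distrib, hA]
    have hone : ∑ x ∈ Finset.range s, c1 x = ∑ x ∈ Finset.range s, (1 : ℤ) :=
      Finset.sum_congr rfl fun x hx => by
        have hx' : x < s := Finset.mem_range.mp hx
        simp [hc1, hx']
    rw [hone, ← Finset.sum_add_distrib, ← Finset.sum_add_distrib]
    refine Finset.sum_congr rfl fun x hx => ?_
    have hx' : x < s := Finset.mem_range.mp hx
    simp only [hc2, hc3]
    split_ifs <;> omega
  have star : ∑ n ∈ Finset.range m, (c1 (n % d) + cdel (n % d)) =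
      ∑ n ∈ Finset.range m, (c2 (n % d) + c3 (n % d)) := by
    have h1 := (sum_mod_range d hd (fun x => c1 x + cdel x) m :
      ∑ n ∈ Finset.range m, (c1 (n % d) + cdel (n % d)) =
        ((m / d : ℕ) : ℤ) * (∑ x ∈ Finset.range d, (c1 x + cdel x)) +
          ∑ x ∈ Finset.range s, (c1 x + cdel x))
    have h2 := (sum_mod_range d hd (fun x => c2 x + c3 x) m :
      ∑ n ∈ Finset.range m, (c2 (n % d) + c3 (n % d)) =
        ((m / d : ℕ) : ℤ) * (∑ x ∈ Finset.range d, (c2 x + c3 x)) +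
          ∑ x ∈ Finset.range s, (c2 x + c3 x))
    rw [h1, h2, claimd, claims]
  -- compositions with mod
  have hc2m : ∀ n : ℕ, c2 (n % d) = (if (p * n) % d < s then (1 : ℤ) else 0) := by
    intro n; simp only [hc2, mulmod d p n]
  have hc3m : ∀ n : ℕ, c3 (n % d) = (if n % d < (p * n) % d then (1 : ℤ) else 0) := by
    intro n; simp only [hc3, mulmod d p n]
  -- sum of KD over range m equals d * pTri
  have hKDpTri : ∑ n ∈ Finset.range m, KD d p s n = (d : ℤ) * pTri d p m := by
    have hzero : ∑ n ∈ Finset.range m,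
        (deltaIn d p n + ((if n % d < s then (1 : ℤ) else 0)
          - (if (p * n) % d < s then (1 : ℤ) else 0)
          - (if n % d < (p * n) % d then (1 : ℤ) else 0))) = 0 := by
      have := star
      rw [Finset.sum_add_distrib, Finset.sum_add_distrib] at this
      have hrw : ∀ n ∈ Finset.range m,
          deltaIn d p n + ((if n % d < s then (1 : ℤ) else 0)
            - (if (p * n) % d < s then (1 : ℤ) else 0)
            - (if n % d < (p * n) % d then (1 : ℤ) else 0)) =
          (c1 (n % d) + cdel (n % d)) - (c2 (n % d) + c3 (n % d)) := by
        intro n _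
        rw [hδ n, hc2m n, hc3m n]
        simp only [hc1]
        ring
      rw [Finset.sum_congr rfl hrw, Finset.sum_sub_distrib, star, sub_self]
    have hexp : ∑ n ∈ Finset.range m, KD d p s n =
        (d : ℤ) * (∑ n ∈ Finset.range m, varpi d p n) +
          (d : ℤ) * ∑ n ∈ Finset.range m,
            (deltaIn d p n + ((if n % d < s then (1 : ℤ) else 0)
              - (if (p * n) % d < s then (1 : ℤ) else 0)
              - (if n % d < (p * n) % d then (1 : ℤ) else 0))) := by
      rw [Finset.mul_sum, Finset.mul_sum, ← Finset.sum_add_distrib]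
      refine Finset.sum_congr rfl fun n _ => ?_
      rw [kd_varpi d p s hd n]
      ring
    rw [hexp, hzero, mul_zero, add_zero, pTri]
  -- monotonicity of KD
  have hKDmono : Monotone (KD d p s) :=
    monotone_nat_of_le_succ fun n => by linarith [kd_step d p s hd hpd n]
  -- lower bound:  d * (goal sum) ≥ ∑_{a ∈ A} KD a.1
  set T : ℤ := ∑ a ∈ A, ⌈((p : ℚ) * a.1 - ((τ a).1 : ℚ)) / d⌉ with hT
  set F : ℕ × ZMod b → ℤ := fun x =>
    -(x.1 : ℤ) + ((x.1 % d : ℕ) : ℤ) + (d : ℤ) * (if x.1 % d < s then (1 : ℤ) else 0) with hF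
  set G : ℕ × ZMod b → ℤ := fun a =>
    (p : ℤ) * a.1 - (((p * a.1) % d : ℕ) : ℤ)
      - (d : ℤ) * (if (p * a.1) % d < s then (1 : ℤ) else 0) with hG
  have hperel : ∀ a ∈ A, F (τ a) + G a ≤
      (d : ℤ) * ⌈((p : ℚ) * a.1 - ((τ a).1 : ℚ)) / d⌉ := by
    intro a _
    have hceil := ceil_mul_d d hd ((p : ℤ) * a.1 - ((τ a).1 : ℤ))
    rw [show ((((p : ℤ) * a.1 - ((τ a).1 : ℤ)) : ℤ) : ℚ) = (p : ℚ) * a.1 - ((τ a).1 : ℚ)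
      by push_cast; ring] at hceil
    rw [hceil, show -((p : ℤ) * a.1 - ((τ a).1 : ℤ)) = (((τ a).1 : ℤ) - p * a.1) by ring]
    have hm1 : (((τ a).1 : ℤ) - p * a.1) % d =
        (((((τ a).1 % d : ℕ)) : ℤ) - (((p * a.1) % d : ℕ) : ℤ)) % d := by
      rw [show (((τ a).1 : ℤ) - p * a.1) = (((τ a).1 : ℤ) - ((p * a.1 : ℕ) : ℤ)) by
        push_cast; ring, Int.sub_emod, ← Int.natCast_mod ((τ a).1) d,
        ← Int.natCast_mod (p * a.1) d]
    rw [hm1]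
    have := pe d s hd ((τ a).1 % d) ((p * a.1) % d) (Nat.mod_lt _ hd) (Nat.mod_lt _ hd)
    simp only [hF, hG]
    linarith
  have hsumFG : ∑ a ∈ A, (F (τ a) + G a) ≤ (d : ℤ) * T := by
    rw [hT, Finset.mul_sum]
    exact Finset.sum_le_sum hperel
  have himg : A.image τ = A := by
    apply Finset.eq_of_subset_of_card_le
    · intro y hy
      obtain ⟨x, hx, rfl⟩ := Finset.mem_image.mp hy
      exact hτ x hx
    · exact le_of_eq (Finset.card_image_of_injective A τ.injective).symm
  have hFτ : ∑ a ∈ A, F (τ a) = ∑ a ∈ A, F a := by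
    calc ∑ a ∈ A, F (τ a) = ∑ y ∈ A.image τ, F y :=
          (Finset.sum_image fun x _ y _ h => τ.injective h).symm
      _ = ∑ a ∈ A, F a := by rw [himg]
  have hKDle : ∑ a ∈ A, KD d p s a.1 ≤ (d : ℤ) * T := by
    have : ∑ a ∈ A, KD d p s a.1 = ∑ a ∈ A, (F (τ a) + G a) := by
      rw [Finset.sum_add_distrib, hFτ, ← Finset.sum_add_distrib]
      refine Finset.sum_congr rfl fun a _ => ?_
      simp only [KD, hF, hG]
      ring
    linarith [hsumFG, this.ge, this.le]
  -- fiber counting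
  set Alo : Finset (ℕ × ZMod b) := A.filter (fun a => a.1 < m) with hAlo
  set Ahi : Finset (ℕ × ZMod b) := A.filter (fun a => ¬ a.1 < m) with hAhi
  have hsplitA : ∑ a ∈ Alo, KD d p s a.1 + ∑ a ∈ Ahi, KD d p s a.1 =
      ∑ a ∈ A, KD d p s a.1 := Finset.sum_filter_add_sum_filter_not A _ _
  have hcards : Alo.card + Ahi.card = b * m := by
    rw [← hcard]; exact Finset.card_filter_add_card_filter_not _
  have hhi : (Ahi.card : ℤ) * (KD d p s (m - 1) + 1) ≤ ∑ a ∈ Ahi, KD d p s a.1 := by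
    have := Finset.card_nsmul_le_sum Ahi (fun a => KD d p s a.1) (KD d p s (m - 1) + 1) ?_
    · rwa [nsmul_eq_mul] at this
    · intro x hx
      have hxm : m ≤ x.1 := by
        have := (Finset.mem_filter.mp hx).2
        omega
      have h1 : KD d p s (m - 1) + 1 ≤ KD d p s m := by
        have := kd_step d p s hd hpd (m - 1)
        rwa [Nat.sub_add_cancel hm] at this
      exact le_trans h1 (hKDmono hxm)
  have hmapsto : ∀ a ∈ Alo, a.1 ∈ Finset.range m := by
    intro a ha
    exact Finset.mem_range.mpr (Finset.mem_filter.mp ha).2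
  have hfib : ∑ a ∈ Alo, KD d p s a.1 =
      ∑ j ∈ Finset.range m, ((Alo.filter (fun a => a.1 = j)).card : ℤ) * KD d p s j := by
    rw [← Finset.sum_fiberwise_of_maps_to hmapsto (fun a => KD d p s a.1)]
    refine Finset.sum_congr rfl fun j _ => ?_
    rw [Finset.sum_congr rfl (fun a ha => by
      rw [(Finset.mem_filter.mp ha).2]), Finset.sum_const, nsmul_eq_mul]
  have hnj : ∀ j, ((Alo.filter (fun a => a.1 = j)).card) ≤ b := by
    intro j
    have := Finset.card_le_card_of_injOn (fun a => a.2)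
      (fun a _ => Finset.mem_univ a.2) (s := Alo.filter (fun a => a.1 = j))
      (t := (Finset.univ : Finset (ZMod b))) ?_
    · rwa [Finset.card_univ, ZMod.card] at this
    · intro x hx y hy hxy
      have hx1 : x.1 = j := (Finset.mem_filter.mp (Finset.mem_coe.mp hx)).2
      have hy1 : y.1 = j := (Finset.mem_filter.mp (Finset.mem_coe.mp hy)).2
      exact Prod.ext (hx1.trans hy1.symm) hxy
  have hcnt : ∑ j ∈ Finset.range m, (Alo.filter (fun a => a.1 = j)).card = Alo.card :=
    (Finset.card_eq_sum_card_fiberwise hmapsto).symm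
  have hlo : (b : ℤ) * (∑ n ∈ Finset.range m, KD d p s n) ≤
      ∑ a ∈ Alo, KD d p s a.1 + (Ahi.card : ℤ) * KD d p s (m - 1) := by
    have hdiff : ∑ j ∈ Finset.range m,
        ((b : ℤ) - ((Alo.filter (fun a => a.1 = j)).card : ℤ)) * KD d p s j ≤
        ∑ j ∈ Finset.range m,
        ((b : ℤ) - ((Alo.filter (fun a => a.1 = j)).card : ℤ)) * KD d p s (m - 1) := by
      refine Finset.sum_le_sum fun j hj => ?_
      have hjm : j ≤ m - 1 := by
        have := Finset.mem_range.mp hj; omega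
      have h1 : KD d p s j ≤ KD d p s (m - 1) := hKDmono hjm
      have h2 : (0 : ℤ) ≤ (b : ℤ) - ((Alo.filter (fun a => a.1 = j)).card : ℤ) := by
        have := hnj j; push_cast; omega
      exact mul_le_mul_of_nonneg_left h1 h2
    have hcoef : ∑ j ∈ Finset.range m,
        ((b : ℤ) - ((Alo.filter (fun a => a.1 = j)).card : ℤ)) = (Ahi.card : ℤ) := by
      rw [Finset.sum_sub_distrib, Finset.sum_const, Finset.card_range, nsmul_eq_mul]
      have : ∑ j ∈ Finset.range m, ((Alo.filter (fun a => a.1 = j)).card : ℤ) =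
          (Alo.card : ℤ) := by rw [← Nat.cast_sum, hcnt]
      rw [this]
      have hc' : (Alo.card : ℤ) + (Ahi.card : ℤ) = (b : ℤ) * m := by exact_mod_cast hcards
      push_cast
      linarith
    have hexp2 : (b : ℤ) * (∑ n ∈ Finset.range m, KD d p s n) -
        ∑ a ∈ Alo, KD d p s a.1 =
        ∑ j ∈ Finset.range m,
          ((b : ℤ) - ((Alo.filter (fun a => a.1 = j)).card : ℤ)) * KD d p s j := by
      rw [hfib, Finset.mul_sum, ← Finset.sum_sub_distrib]
      refine Finset.sum_congr rfl fun j _ => ?_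
      ring
    have hsum_mul : ∑ j ∈ Finset.range m,
        ((b : ℤ) - ((Alo.filter (fun a => a.1 = j)).card : ℤ)) * KD d p s (m - 1) =
        (Ahi.card : ℤ) * KD d p s (m - 1) := by
      rw [← Finset.sum_mul, hcoef]
    rw [hsum_mul] at hdiff
    linarith [hdiff, hexp2]
  -- main chain
  have hmain : (d : ℤ) * ((b : ℤ) * pTri d p m) + (Ahi.card : ℤ) ≤ (d : ℤ) * T := by
    have h1 : (d : ℤ) * ((b : ℤ) * pTri d p m) =
        (b : ℤ) * (∑ n ∈ Finset.range m, KD d p s n) := by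
      rw [hKDpTri]; ring
    linarith [hlo, hhi, hsplitA, hKDle, h1]
  constructor
  · have h0 : (0 : ℤ) ≤ (Ahi.card : ℤ) := by positivity
    have : (d : ℤ) * ((b : ℤ) * pTri d p m) ≤ (d : ℤ) * T := by linarith
    exact le_of_mul_le_mul_left this hdpos
  · rintro ⟨-, hne⟩
    have htpos : 1 ≤ (Ahi.card : ℤ) := by
      by_contra hcon
      have hAhi0 : Ahi.card = 0 := by omega
      have hAhiempty : Ahi = ∅ := Finset.card_eq_zero.mp hAhi0
      have hAeq : A = Finset.range m ×ˢ (Finset.univ : Finset (ZMod b)) := by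
        apply Finset.eq_of_subset_of_card_le
        · intro a ha
          rw [Finset.mem_product, Finset.mem_range]
          refine ⟨?_, Finset.mem_univ _⟩
          by_contra hlt
          have : a ∈ Ahi := Finset.mem_filter.mpr ⟨ha, hlt⟩
          rw [hAhiempty] at this
          exact absurd this (Finset.notMem_empty a)
        · rw [Finset.card_product, Finset.card_range, Finset.card_univ, ZMod.card, hcard,
            Nat.mul_comm]
      apply hne
      ext x
      have hsm := varpi_strictMono d p hd hpd
      constructor
      · intro hx
        rw [hAeq] at hx
        have := (Finset.mem_product.mp hx).1
        have hxm : x.1 < m := Finset.mem_range.mp this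
        have : x.1 ≤ m - 1 := by omega
        exact hsm.monotone this
      · intro hx
        have hxle : varpi d p x.1 ≤ varpi d p (m - 1) := hx
        have hxm : x.1 ≤ m - 1 := (hsm.le_iff_le).mp hxle
        rw [hAeq]
        exact Finset.mem_product.mpr ⟨Finset.mem_range.mpr (by omega), Finset.mem_univ _⟩
    have : (d : ℤ) * ((b : ℤ) * pTri d p m) < (d : ℤ) * T := by linarith
    exact lt_of_mul_lt_mul_left this (le_of_lt hdpos)
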